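/- For the Erdős–Rényi random graph G(n,p) with n >= 2 and integers m, l >= 1, the covariance of the number of (m+1)-stars centered at vertex 1 and the number of (l+1)-stars centered at vertex 2 equals C(n-2, m-1) * C(n-2, l-1) * p^{m+l-1} * (1-p). -/

import Mathlib

open MeasureTheory ProbabilityTheory Finset

/-- A measurable 0/1-valued function is integrable w.r.t. a probability measure. -/
lemma aux_int01 {Ω : Type*} [MeasurableSpace Ω] (μ : Measure Ω) [IsProbabilityMeasure μ]
    {f : Ω → ℝ} (hf : Measurable f) (h : ∀ ω, f ω = 0 ∨ f ω = 1) : Integrable f μ := by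
  refine ⟨hf.aestronglyMeasurable, ?_⟩
  apply MeasureTheory.HasFiniteIntegral.of_bounded (C := 1)
  filter_upwards with ω
  rcases h ω with h | h <;> simp [h]

/-- Expectation of a 0/1-valued (Bernoulli) random variable. -/
lemma aux_integral01 {Ω : Type*} [MeasurableSpace Ω] (μ : Measure Ω) [IsProbabilityMeasure μ]
    {f : Ω → ℝ} (hf : Measurable f) (h : ∀ ω, f ω = 0 ∨ f ω = 1)
    {p : ℝ} (hp0 : 0 ≤ p) (hμ : μ {ω | f ω = 1} = ENNReal.ofReal p) :
    ∫ ω, f ω ∂μ = p := by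
  have hset : MeasurableSet {ω | f ω = 1} := hf (measurableSet_singleton 1)
  have hfeq : f = Set.indicator {ω | f ω = 1} (fun _ => (1 : ℝ)) := by
    funext ω
    rcases h ω with h' | h' <;> simp [Set.indicator, h']
  rw [hfeq, integral_indicator_const _ hset, measureReal_def, hμ]
  simp [ENNReal.toReal_ofReal hp0]

/-- Product of 0/1-valued functions is 0/1-valued. -/
lemma aux_prod01 {α Ω : Type*} (s : Finset α) (f : α → Ω → ℝ)
    (h : ∀ i ∈ s, ∀ ω, f i ω = 0 ∨ f i ω = 1) (ω : Ω) :
    (∏ i ∈ s, f i ω) = 0 ∨ (∏ i ∈ s, f i ω) = 1 := by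
  by_cases hz : ∃ i ∈ s, f i ω = 0
  · obtain ⟨i, hi, h0⟩ := hz
    exact Or.inl (Finset.prod_eq_zero hi h0)
  · push_neg at hz
    exact Or.inr (Finset.prod_eq_one fun i hi => (h i hi ω).resolve_left (hz i hi))

/-- For 0/1-valued `f`, `∏_s f * ∏_t f = ∏_{s ∪ t} f`. -/
lemma aux_prod_union {α : Type*} [DecidableEq α] (s t : Finset α) (f : α → ℝ)
    (h : ∀ i ∈ s ∩ t, f i = 0 ∨ f i = 1) :
    (∏ i ∈ s, f i) * (∏ i ∈ t, f i) = ∏ i ∈ s ∪ t, f i := by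
  rw [← Finset.prod_union_inter]
  by_cases hz : ∃ i ∈ s ∩ t, f i = 0
  · obtain ⟨i, hi, h0⟩ := hz
    rw [Finset.prod_eq_zero hi h0,
      Finset.prod_eq_zero (Finset.mem_union_left _ (Finset.mem_of_mem_inter_left hi)) h0]
    ring
  · push_neg at hz
    rw [Finset.prod_eq_one fun i hi => (h i hi).resolve_left (hz i hi), mul_one]

/-- Expectation of a product of independent 0/1 random variables factorizes. -/
lemma aux_indep_prod {Ω ι : Type*} [MeasurableSpace Ω] {μ : Measure Ω} [IsProbabilityMeasure μ]
    {Y : ι → Ω → ℝ} (hmeas : ∀ i, Measurable (Y i)) (h01 : ∀ i ω, Y i ω = 0 ∨ Y i ω = 1)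
    (hindep : iIndepFun Y μ) (T : Finset ι) :
    ∫ ω, ∏ q ∈ T, Y q ω ∂μ = ∏ q ∈ T, ∫ ω, Y q ω ∂μ := by
  classical
  induction T using Finset.induction with
  | empty => simp
  | @insert a s has ih =>
    simp only [Finset.prod_insert has]
    have hind : IndepFun (Y a) (∏ q ∈ s, Y q) μ :=
      (hindep.indepFun_finsetProd_of_notMem hmeas has).symm
    have hprodeq : (∏ q ∈ s, Y q) = fun ω => ∏ q ∈ s, Y q ω := by
      funext ω; simp
    have hintY : Integrable (Y a) μ := aux_int01 μ (hmeas a) (h01 a)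
    have hintP : Integrable (∏ q ∈ s, Y q) μ := by
      rw [hprodeq]
      exact aux_int01 μ (Finset.measurable_prod s fun i _ => hmeas i)
        (aux_prod01 s Y (fun i _ => h01 i))
    have := hind.integral_mul_eq_mul_integral hintY.1 hintP.1
    rw [hprodeq] at this
    have hmul : ∫ ω, Y a ω * ∏ q ∈ s, Y q ω ∂μ
        = (∫ ω, Y a ω ∂μ) * ∫ ω, ∏ q ∈ s, Y q ω ∂μ := this
    rw [hmul, ih]

/-- Counting subsets of size `m` containing a fixed element. -/
lemma aux_count {α : Type*} [DecidableEq α] (s : Finset α) (a : α) (ha : a ∈ s)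
    {m : ℕ} (hm : 1 ≤ m) :
    ((s.powersetCard m).filter (fun A => a ∈ A)).card = (s.card - 1).choose (m - 1) := by
  have : ((s.powersetCard m).filter (fun A => a ∈ A)).card
      = ((s.erase a).powersetCard (m - 1)).card := by
    refine Finset.card_bij' (fun A _ => A.erase a) (fun B _ => insert a B) ?_ ?_ ?_ ?_
    · intro A hA
      simp only [Finset.mem_filter, Finset.mem_powersetCard] at hA
      obtain ⟨⟨hsub, hcard⟩, hmem⟩ := hA
      rw [Finset.mem_powersetCard]
      constructor
      · exact fun x hx => Finset.mem_erase.2 ⟨(Finset.mem_erase.1 hx).1,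
          hsub (Finset.mem_erase.1 hx).2⟩
      · rw [Finset.card_erase_of_mem hmem, hcard]
    · intro B hB
      rw [Finset.mem_powersetCard] at hB
      obtain ⟨hsub, hcard⟩ := hB
      have haB : a ∉ B := fun h => (Finset.mem_erase.1 (hsub h)).1 rfl
      simp only [Finset.mem_filter, Finset.mem_powersetCard]
      refine ⟨⟨?_, ?_⟩, Finset.mem_insert_self a B⟩
      · intro x hx
        rcases Finset.mem_insert.1 hx with h | h
        · exact h ▸ ha
        · exact Finset.mem_of_mem_erase (hsub h)
      · rw [Finset.card_insert_of_notMem haB, hcard]; omega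
    · intro A hA
      simp only [Finset.mem_filter] at hA
      exact Finset.insert_erase hA.2
    · intro B hB
      rw [Finset.mem_powersetCard] at hB
      have haB : a ∉ B := fun h => (Finset.mem_erase.1 (hB.1 h)).1 rfl
      exact Finset.erase_insert haB
  rw [this, Finset.card_powersetCard, Finset.card_erase_of_mem ha]

/-- Covariance of the number of `(m+1)`-stars centered at vertex `1` and the number of
`(l+1)`-stars centered at vertex `2` in `G(n,p)`:
`Cov = C(n-2, m-1) C(n-2, l-1) p^{m+l-1} (1-p)`. -/
theorem stmt_6 (n m l : ℕ) (hn : 2 ≤ n) (hm : 1 ≤ m) (hl : 1 ≤ l)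
    (p : ℝ) (hp0 : 0 ≤ p) (hp1 : p ≤ 1)
    {Ω : Type*} [MeasurableSpace Ω] (μ : Measure Ω) [IsProbabilityMeasure μ]
    (X : Fin n → Fin n → Ω → ℝ)
    (hmeas : ∀ i j, Measurable (X i j))
    (hsym : ∀ i j, X i j = X j i)
    (hdiag : ∀ i, X i i = 0)
    (h01 : ∀ i j ω, X i j ω = 0 ∨ X i j ω = 1)
    (hbern : ∀ i j, i ≠ j → μ {ω | X i j ω = 1} = ENNReal.ofReal p)
    (hindep : iIndepFun
      (fun (q : {q : Fin n × Fin n // q.1 < q.2}) ω => X q.1.1 q.1.2 ω) μ)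
    (v1 v2 : Fin n) (hv1 : v1 = ⟨0, by omega⟩) (hv2 : v2 = ⟨1, by omega⟩) :
    (∫ ω, (∑ A ∈ (Finset.univ.erase v1).powersetCard m, ∏ j ∈ A, X v1 j ω) *
          (∑ B ∈ (Finset.univ.erase v2).powersetCard l, ∏ j ∈ B, X v2 j ω) ∂μ) -
      (∫ ω, ∑ A ∈ (Finset.univ.erase v1).powersetCard m, ∏ j ∈ A, X v1 j ω ∂μ) *
      (∫ ω, ∑ B ∈ (Finset.univ.erase v2).powersetCard l, ∏ j ∈ B, X v2 j ω ∂μ) =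
      ((n - 2).choose (m - 1)) * ((n - 2).choose (l - 1)) * p ^ (m + l - 1) * (1 - p) := by
  classical
  have hvlt : v1 < v2 := by subst hv1; subst hv2; exact Fin.mk_lt_mk.mpr (by omega)
  have hvne : v1 ≠ v2 := ne_of_lt hvlt
  set Y : {q : Fin n × Fin n // q.1 < q.2} → Ω → ℝ := fun q ω => X q.1.1 q.1.2 ω with hYdef
  have hYmeas : ∀ q, Measurable (Y q) := fun q => hmeas _ _
  have hY01 : ∀ q ω, Y q ω = 0 ∨ Y q ω = 1 := fun q ω => h01 _ _ ω
  have hYexp : ∀ q, ∫ ω, Y q ω ∂μ = p := fun q =>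
    aux_integral01 μ (hYmeas q) (hY01 q) hp0 (hbern _ _ (ne_of_lt q.2))
  -- the edge map
  set Em : Fin n → Fin n → {q : Fin n × Fin n // q.1 < q.2} := fun i j =>
    if h : i < j then ⟨(i, j), h⟩ else if h' : j < i then ⟨(j, i), h'⟩ else ⟨(v1, v2), hvlt⟩
    with hEmdef
  have hEspec : ∀ i j : Fin n, i ≠ j → (Em i j).1 = (i, j) ∨ (Em i j).1 = (j, i) := by
    intro i j hij
    rcases lt_or_gt_of_ne hij with h | h
    · left; simp [hEmdef, h]
    · right; simp [hEmdef, not_lt_of_gt h, h]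
  have hYE : ∀ (i j : Fin n), i ≠ j → ∀ ω, Y (Em i j) ω = X i j ω := by
    intro i j hij ω
    rcases lt_or_gt_of_ne hij with h | h
    · simp [hEmdef, h, hYdef]
    · simp only [hEmdef, dif_neg (not_lt_of_gt h), dif_pos h, hYdef]
      exact congrFun (hsym j i) ω
  have hEpair : ∀ (i j i' j' : Fin n), i ≠ j → i' ≠ j' → Em i j = Em i' j' →
      ((i = i' ∧ j = j') ∨ (i = j' ∧ j = i')) := by
    intro i j i' j' h h' heq
    have h1 := hEspec i j h
    have h2 := hEspec i' j' h'
    have hv : (Em i j).1 = (Em i' j').1 := by rw [heq]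
    rcases h1 with h1 | h1 <;> rcases h2 with h2 | h2 <;>
      rw [h1, h2] at hv <;> simp only [Prod.mk.injEq] at hv <;> tauto
  have hEvv : Em v2 v1 = Em v1 v2 := by
    simp [hEmdef, hvlt, not_lt_of_gt hvlt]
  -- injectivity on sets avoiding the center
  have hEinj : ∀ (v : Fin n) (A : Finset (Fin n)), A ⊆ Finset.univ.erase v →
      ∀ x ∈ A, ∀ y ∈ A, Em v x = Em v y → x = y := by
    intro v A hA x hx y hy hxy
    have hxv : v ≠ x := fun h => (Finset.mem_erase.1 (hA hx)).1 h.symm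
    have hyv : v ≠ y := fun h => (Finset.mem_erase.1 (hA hy)).1 h.symm
    rcases hEpair v x v y hxv hyv hxy with ⟨_, h⟩ | ⟨h1, h2⟩
    · exact h
    · exact absurd h1 hyv
  have hcardIm : ∀ (v : Fin n) (A : Finset (Fin n)), A ⊆ Finset.univ.erase v →
      (A.image (Em v)).card = A.card := by
    intro v A hA
    exact Finset.card_image_of_injOn fun x hx y hy =>
      hEinj v A hA x (Finset.mem_coe.1 hx) y (Finset.mem_coe.1 hy)
  have hprodIm : ∀ (v : Fin n) (A : Finset (Fin n)), A ⊆ Finset.univ.erase v → ∀ ω,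
      ∏ j ∈ A, X v j ω = ∏ q ∈ A.image (Em v), Y q ω := by
    intro v A hA ω
    rw [Finset.prod_image (hEinj v A hA)]
    refine Finset.prod_congr rfl fun j hj => ?_
    exact (hYE v j (fun h => (Finset.mem_erase.1 (hA hj)).1 h.symm) ω).symm
  set P := (Finset.univ.erase v1).powersetCard m with hPdef
  set Q := (Finset.univ.erase v2).powersetCard l with hQdef
  -- intersection of edge images
  have hinterT : ∀ A ∈ P, ∀ B ∈ Q, (A.image (Em v1)) ∩ (B.image (Em v2)) =
      (if v2 ∈ A ∧ v1 ∈ B then {Em v1 v2} else ∅) := by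
    intro A hA B hB
    obtain ⟨hAsub, hAcard⟩ := Finset.mem_powersetCard.1 hA
    obtain ⟨hBsub, hBcard⟩ := Finset.mem_powersetCard.1 hB
    ext q
    simp only [Finset.mem_inter, Finset.mem_image]
    constructor
    · rintro ⟨⟨j, hj, rfl⟩, ⟨j', hj', heq⟩⟩
      have hne1 : v1 ≠ j := fun h => (Finset.mem_erase.1 (hAsub hj)).1 h.symm
      have hne2 : v2 ≠ j' := fun h => (Finset.mem_erase.1 (hBsub hj')).1 h.symm
      rcases hEpair v2 j' v1 j hne2 hne1 heq with ⟨h1, h2⟩ | ⟨h1, h2⟩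
      · exact absurd h1 hvne.symm
      · rw [if_pos ⟨h1 ▸ hj, h2 ▸ hj'⟩]
        rw [Finset.mem_singleton, ← h1]
    · intro hq
      by_cases hc : v2 ∈ A ∧ v1 ∈ B
      · rw [if_pos hc, Finset.mem_singleton] at hq
        subst hq
        exact ⟨⟨v2, hc.1, rfl⟩, ⟨v1, hc.2, hEvv⟩⟩
      · rw [if_neg hc] at hq
        exact absurd hq (Finset.notMem_empty q)
  have hunionCard : ∀ A ∈ P, ∀ B ∈ Q, ((A.image (Em v1)) ∪ (B.image (Em v2))).card
      = m + l - (if v2 ∈ A ∧ v1 ∈ B then 1 else 0) := by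
    intro A hA B hB
    obtain ⟨hAsub, hAcard⟩ := Finset.mem_powersetCard.1 hA
    obtain ⟨hBsub, hBcard⟩ := Finset.mem_powersetCard.1 hB
    have hci := Finset.card_union_add_card_inter (A.image (Em v1)) (B.image (Em v2))
    rw [hinterT A hA B hB, hcardIm v1 A hAsub, hcardIm v2 B hBsub, hAcard, hBcard] at hci
    by_cases hc : v2 ∈ A ∧ v1 ∈ B
    · rw [if_pos hc] at hci ⊢
      rw [Finset.card_singleton] at hci
      omega
    · rw [if_neg hc] at hci ⊢
      rw [Finset.card_empty] at hci
      omega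
  -- joint expectation
  have hjointInt : ∀ A ∈ P, ∀ B ∈ Q,
      ∫ ω, (∏ j ∈ A, X v1 j ω) * (∏ j ∈ B, X v2 j ω) ∂μ
      = p ^ (m + l - (if v2 ∈ A ∧ v1 ∈ B then 1 else 0)) := by
    intro A hA B hB
    obtain ⟨hAsub, hAcard⟩ := Finset.mem_powersetCard.1 hA
    obtain ⟨hBsub, hBcard⟩ := Finset.mem_powersetCard.1 hB
    have hfun : ∀ ω, (∏ j ∈ A, X v1 j ω) * (∏ j ∈ B, X v2 j ω)
        = ∏ q ∈ (A.image (Em v1)) ∪ (B.image (Em v2)), Y q ω := by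
      intro ω
      rw [hprodIm v1 A hAsub ω, hprodIm v2 B hBsub ω]
      exact aux_prod_union _ _ _ (fun q _ => hY01 q ω)
    simp only [hfun]
    rw [aux_indep_prod hYmeas hY01 hindep,
      Finset.prod_congr rfl (fun q _ => hYexp q), Finset.prod_const,
      hunionCard A hA B hB]
  -- marginal expectation
  have hmarg : ∀ (v : Fin n) (A : Finset (Fin n)), A ⊆ Finset.univ.erase v →
      ∫ ω, ∏ j ∈ A, X v j ω ∂μ = p ^ A.card := by
    intro v A hsub
    simp only [hprodIm v A hsub]
    rw [aux_indep_prod hYmeas hY01 hindep,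
      Finset.prod_congr rfl (fun q _ => hYexp q), Finset.prod_const, hcardIm v A hsub]
  -- integrability
  have hintProd : ∀ (v : Fin n) (A : Finset (Fin n)),
      Integrable (fun ω => ∏ j ∈ A, X v j ω) μ := fun v A =>
    aux_int01 μ (Finset.measurable_prod A fun j _ => hmeas v j)
      (aux_prod01 A (fun j => X v j) fun j _ ω => h01 v j ω)
  -- expectations of sums
  have hS1 : ∫ ω, ∑ A ∈ P, ∏ j ∈ A, X v1 j ω ∂μ = ∑ A ∈ P, p ^ m := by
    rw [integral_finset_sum P fun A _ => hintProd v1 A]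
    refine Finset.sum_congr rfl fun A hA => ?_
    rw [hmarg v1 A (Finset.mem_powersetCard.1 hA).1, (Finset.mem_powersetCard.1 hA).2]
  have hS2 : ∫ ω, ∑ B ∈ Q, ∏ j ∈ B, X v2 j ω ∂μ = ∑ B ∈ Q, p ^ l := by
    rw [integral_finset_sum Q fun B _ => hintProd v2 B]
    refine Finset.sum_congr rfl fun B hB => ?_
    rw [hmarg v2 B (Finset.mem_powersetCard.1 hB).1, (Finset.mem_powersetCard.1 hB).2]
  have hS12 : ∫ ω, (∑ A ∈ P, ∏ j ∈ A, X v1 j ω) * (∑ B ∈ Q, ∏ j ∈ B, X v2 j ω) ∂μ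
      = ∑ A ∈ P, ∑ B ∈ Q, p ^ (m + l - (if v2 ∈ A ∧ v1 ∈ B then 1 else 0)) := by
    have hrw : ∀ ω, (∑ A ∈ P, ∏ j ∈ A, X v1 j ω) * (∑ B ∈ Q, ∏ j ∈ B, X v2 j ω)
        = ∑ x ∈ P ×ˢ Q, (∏ j ∈ x.1, X v1 j ω) * (∏ j ∈ x.2, X v2 j ω) := by
      intro ω
      rw [Finset.sum_mul_sum, Finset.sum_product]
    simp only [hrw]
    rw [integral_finset_sum]
    · rw [Finset.sum_product]
      exact Finset.sum_congr rfl fun A hA => Finset.sum_congr rfl fun B hB =>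
        hjointInt A hA B hB
    · intro x _
      refine aux_int01 μ
        ((Finset.measurable_prod x.1 fun j _ => hmeas v1 j).mul
          (Finset.measurable_prod x.2 fun j _ => hmeas v2 j)) fun ω => ?_
      rcases aux_prod01 x.1 (fun j => X v1 j) (fun j _ ω => h01 v1 j ω) ω with h | h <;>
        rcases aux_prod01 x.2 (fun j => X v2 j) (fun j _ ω => h01 v2 j ω) ω with h' | h' <;>
          simp [h, h']
  rw [hS12, hS1, hS2, Finset.sum_mul_sum]
  have hdiff : ∀ A ∈ P, ∀ B ∈ Q,
      p ^ (m + l - (if v2 ∈ A ∧ v1 ∈ B then 1 else 0)) - p ^ m * p ^ l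
      = (if v2 ∈ A ∧ v1 ∈ B then p ^ (m + l - 1) * (1 - p) else 0) := by
    intro A _ B _
    by_cases hc : v2 ∈ A ∧ v1 ∈ B
    · rw [if_pos hc, if_pos hc, ← pow_add]
      have hml : m + l = (m + l - 1) + 1 := by omega
      rw [hml]
      simp only [Nat.add_sub_cancel, pow_succ]
      ring
    · rw [if_neg hc, if_neg hc, ← pow_add]
      simp
  have hsplit : ∀ A ∈ P, ∑ B ∈ Q, (if v2 ∈ A ∧ v1 ∈ B then p ^ (m + l - 1) * (1 - p) else 0)
      = (if v2 ∈ A then (1 : ℝ) else 0) *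
        ∑ B ∈ Q, (if v1 ∈ B then p ^ (m + l - 1) * (1 - p) else 0) := by
    intro A _
    by_cases hA2 : v2 ∈ A <;> simp [hA2]
  have hcountA : ((P.filter (fun A => v2 ∈ A)).card : ℝ) = (n - 2).choose (m - 1) := by
    have hv2mem : v2 ∈ Finset.univ.erase v1 :=
      Finset.mem_erase.2 ⟨hvne.symm, Finset.mem_univ _⟩
    rw [hPdef, aux_count _ _ hv2mem hm, Finset.card_erase_of_mem (Finset.mem_univ v1),
      Finset.card_univ, Fintype.card_fin]
    have h' : n - 1 - 1 = n - 2 := by omega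
    rw [h']
  have hcountB : ((Q.filter (fun B => v1 ∈ B)).card : ℝ) = (n - 2).choose (l - 1) := by
    have hv1mem : v1 ∈ Finset.univ.erase v2 :=
      Finset.mem_erase.2 ⟨hvne, Finset.mem_univ _⟩
    rw [hQdef, aux_count _ _ hv1mem hl, Finset.card_erase_of_mem (Finset.mem_univ v2),
      Finset.card_univ, Fintype.card_fin]
    have h' : n - 1 - 1 = n - 2 := by omega
    rw [h']
  calc (∑ A ∈ P, ∑ B ∈ Q, p ^ (m + l - (if v2 ∈ A ∧ v1 ∈ B then 1 else 0)))
        - ∑ A ∈ P, ∑ B ∈ Q, p ^ m * p ^ l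
      = ∑ A ∈ P, ∑ B ∈ Q, (p ^ (m + l - (if v2 ∈ A ∧ v1 ∈ B then 1 else 0)) - p ^ m * p ^ l) := by
        rw [← Finset.sum_sub_distrib]
        exact Finset.sum_congr rfl fun A _ => (Finset.sum_sub_distrib _ _).symm
    _ = ∑ A ∈ P, ∑ B ∈ Q, (if v2 ∈ A ∧ v1 ∈ B then p ^ (m + l - 1) * (1 - p) else 0) :=
        Finset.sum_congr rfl fun A hA => Finset.sum_congr rfl fun B hB => hdiff A hA B hB
    _ = (∑ A ∈ P, if v2 ∈ A then (1 : ℝ) else 0) *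
        ∑ B ∈ Q, (if v1 ∈ B then p ^ (m + l - 1) * (1 - p) else 0) := by
        rw [Finset.sum_congr rfl hsplit, ← Finset.sum_mul]
    _ = ((P.filter (fun A => v2 ∈ A)).card : ℝ) *
        (((Q.filter (fun B => v1 ∈ B)).card : ℝ) * (p ^ (m + l - 1) * (1 - p))) := by
        rw [Finset.sum_boole, ← Finset.sum_filter, Finset.sum_const, nsmul_eq_mul]
    _ = ((n - 2).choose (m - 1)) * ((n - 2).choose (l - 1)) * p ^ (m + l - 1) * (1 - p) := by
        rw [hcountA, hcountB]; ring
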